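/- Let g be a complex semisimple Lie algebra identified with its dual via the Killing form, with the Poisson bracket [p,q](x) = (x, [dp(x), dq(x)]) on polynomial functions. Fix u in g. Then the space V_u spanned by all functions x ↦ I(tu + x), where I ranges over G-invariant polynomials and t over ℂ, is Poisson commutative: [p,q] = 0 for all p,q in V_u. -/

import Mathlib

set_option linter.unusedSectionVars false

open MvPolynomial in
private lemma core_deriv (n : ℕ) (P : MvPolynomial (Fin n) ℂ) (a v : Fin n → ℂ) :
    HasDerivAt (fun s : ℂ => MvPolynomial.eval (fun i => a i + s * v i) P)
      (∑ i, v i * MvPolynomial.eval a (MvPolynomial.pderiv i P)) 0 := by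
  induction P using MvPolynomial.induction_on with
  | C r => simpa using hasDerivAt_const (0:ℂ) ((C r : MvPolynomial (Fin n) ℂ).eval a)
  | add p q hp hq => simpa [mul_add, Finset.sum_add_distrib] using hp.fun_add hq
  | mul_X p i hp =>
      have h2 : HasDerivAt (fun s : ℂ => a i + s * v i) (v i) 0 := by
        simpa using ((hasDerivAt_id (0:ℂ)).mul_const (v i)).const_add (a i)
      have key := hp.fun_mul h2
      simp only [eval_mul, eval_X] at key ⊢
      refine key.congr_deriv (Eq.symm ?_)
      simp only [pderiv_mul, pderiv_X, map_add, eval_mul, eval_X, zero_mul, add_zero,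
        Pi.single_apply, apply_ite (MvPolynomial.eval a), map_zero, mul_ite, mul_one, mul_zero,
        Finset.sum_add_distrib, Finset.sum_ite_eq', Finset.mem_univ, if_true]
      rw [Finset.sum_mul]
      simp only [mul_add, Finset.sum_add_distrib, mul_ite, mul_zero, Finset.sum_ite_eq',
        Finset.mem_univ, if_true]
      ring_nf
      rw [Finset.sum_ite_eq]
      simp [mul_comm]
      rw [add_comm]; simp only [mul_assoc]

section aux

variable (g : Type*) [LieRing g] [LieAlgebra ℂ g] [Module.Finite ℂ g]
    [LieAlgebra.IsKilling ℂ g] [LieAlgebra.IsSemisimple ℂ g]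

/-- Killing-dual of a linear functional. -/
noncomputable def kdual (φ : Module.Dual ℂ g) : g :=
  ((killingForm ℂ g).toDual (LieAlgebra.IsKilling.killingForm_nondegenerate ℂ g)).symm φ

lemma kdual_apply (φ : Module.Dual ℂ g) (z : g) : killingForm ℂ g (kdual g φ) z = φ z :=
  LinearMap.BilinForm.apply_toDual_symm_apply φ z

/-- The Killing gradient of the polynomial function determined by `P` in coords of `b`. -/
noncomputable def gradVec (n : ℕ) (b : Module.Basis (Fin n) ℂ g) (P : MvPolynomial (Fin n) ℂ)
    (y : g) : g :=
  ∑ i, (MvPolynomial.eval (fun j => b.repr y j) (MvPolynomial.pderiv i P)) • kdual g (b.coord i)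

lemma killingForm_gradVec (n : ℕ) (b : Module.Basis (Fin n) ℂ g) (P : MvPolynomial (Fin n) ℂ)
    (y z : g) : killingForm ℂ g (gradVec g n b P y) z
      = ∑ i, MvPolynomial.eval (fun j => b.repr y j) (MvPolynomial.pderiv i P) * b.repr z i := by
  simp [gradVec, kdual_apply]

lemma hasDerivAt_gradVec (n : ℕ) (b : Module.Basis (Fin n) ℂ g) (P : MvPolynomial (Fin n) ℂ)
    (y z : g) :
    HasDerivAt (fun s : ℂ => MvPolynomial.eval (fun i => b.repr (y + s • z) i) P)
      (killingForm ℂ g (gradVec g n b P y) z) 0 := by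
  have h := core_deriv n P (fun i => b.repr y i) (fun i => b.repr z i)
  rw [killingForm_gradVec]
  have hfun : (fun s : ℂ => MvPolynomial.eval (fun i => b.repr (y + s • z) i) P)
      = fun s : ℂ => MvPolynomial.eval (fun i => b.repr y i + s * b.repr z i) P := by
    funext s
    have : (fun i => (b.repr (y + s • z)) i) = fun i => b.repr y i + s * b.repr z i := by
      funext i; simp
    rw [this]
  rw [hfun]
  convert h using 1
  exact Finset.sum_congr rfl fun i _ => mul_comm _ _


lemma killingForm_lie_eq_zero_of_forall {v y : g}
    (h : ∀ z : g, killingForm ℂ g v ⁅z, y⁆ = 0) : ⁅v, y⁆ = 0 := by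
  apply (LieAlgebra.IsKilling.killingForm_nondegenerate ℂ g).1
  intro z
  rw [LieModule.traceForm_apply_lie_apply]
  have := h z
  rw [← lie_skew z y, map_neg] at this
  simpa using this

lemma gradVec_lie_self (n : ℕ) (b : Module.Basis (Fin n) ℂ g) (P : MvPolynomial (Fin n) ℂ)
    (I : g → ℂ) (hI : ∀ x : g, I x = MvPolynomial.eval (fun i => b.repr x i) P)
    (hinv : ∀ x z : g, HasDerivAt (fun s : ℂ => I (x + s • ⁅z, x⁆)) 0 0) (y : g) :
    ⁅gradVec g n b P y, y⁆ = 0 := by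
  apply killingForm_lie_eq_zero_of_forall
  intro z
  have h1 := hasDerivAt_gradVec g n b P y ⁅z, y⁆
  have h2 := hinv y z
  have hfun : (fun s : ℂ => I (y + s • ⁅z, y⁆))
      = fun s : ℂ => MvPolynomial.eval (fun i => b.repr (y + s • ⁅z, y⁆) i) P := by
    funext s; exact hI _
  rw [hfun] at h2
  exact h1.unique h2


lemma pair_ne {t s : ℂ} (hts : t ≠ s) (u x v w : g)
    (hv : ⁅v, t • u + x⁆ = 0) (hw : ⁅w, s • u + x⁆ = 0) :
    killingForm ℂ g x ⁅v, w⁆ = 0 := by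
  have hkill : killingForm ℂ g = LieModule.traceForm ℂ g g := rfl
  rw [hkill]
  set κ := LieModule.traceForm ℂ g g with hκ
  have hvx : ⁅x, v⁆ = t • ⁅v, u⁆ := by
    have h : ⁅v, x⁆ = -(t • ⁅v, u⁆) := by
      rw [eq_neg_iff_add_eq_zero, add_comm, ← lie_smul, ← lie_add]
      exact hv
    rw [← lie_skew, h, neg_neg]
  have hwx : ⁅x, w⁆ = s • ⁅w, u⁆ := by
    have h : ⁅w, x⁆ = -(s • ⁅w, u⁆) := by
      rw [eq_neg_iff_add_eq_zero, add_comm, ← lie_smul, ← lie_add]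
      exact hw
    rw [← lie_skew, h, neg_neg]
  set B := κ ⁅u, v⁆ w with hB
  have e1 : κ x ⁅v, w⁆ = -t * B := by
    rw [← LieModule.traceForm_apply_lie_apply, hvx, map_smul, ← lie_skew v u, map_neg]
    simp only [LinearMap.smul_apply, LinearMap.neg_apply, smul_eq_mul, hB]
    ring
  have e2 : κ x ⁅v, w⁆ = -s * B := by
    have h5 : κ x ⁅v, w⁆ = - κ x ⁅w, v⁆ := by rw [← lie_skew v w, map_neg]
    rw [h5, ← LieModule.traceForm_apply_lie_apply, hwx, map_smul, ← lie_skew w u, map_neg]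
    have h3 : κ ⁅u, w⁆ v = -B := by
      rw [LieModule.traceForm_apply_lie_apply, ← lie_skew w v, map_neg, hB,
        LieModule.traceForm_apply_lie_apply]
    simp only [LinearMap.smul_apply, LinearMap.neg_apply, smul_eq_mul, ← hκ, h3]
    ring
  have hB0 : B = 0 := by
    have h6 := e1.symm.trans e2
    have h4 : (s - t) * B = 0 := by linear_combination h6
    rcases mul_eq_zero.mp h4 with h | h
    · exact absurd (sub_eq_zero.mp h) (Ne.symm hts)
    · exact h
  rw [e1, hB0, mul_zero]

lemma pair_zero (u x : g) {nI : ℕ} (bI : Module.Basis (Fin nI) ℂ g) (PI : MvPolynomial (Fin nI) ℂ)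
    (I : g → ℂ) (hI : ∀ y : g, I y = MvPolynomial.eval (fun i => bI.repr y i) PI)
    (hinvI : ∀ y z : g, HasDerivAt (fun s : ℂ => I (y + s • ⁅z, y⁆)) 0 0) (t : ℂ)
    {nJ : ℕ} (bJ : Module.Basis (Fin nJ) ℂ g) (PJ : MvPolynomial (Fin nJ) ℂ)
    (J : g → ℂ) (hJ : ∀ y : g, J y = MvPolynomial.eval (fun i => bJ.repr y i) PJ)
    (hinvJ : ∀ y z : g, HasDerivAt (fun s : ℂ => J (y + s • ⁅z, y⁆)) 0 0) (s : ℂ) :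
    killingForm ℂ g x ⁅gradVec g nI bI PI (t • u + x), gradVec g nJ bJ PJ (s • u + x)⁆ = 0 := by
  set v := gradVec g nI bI PI (t • u + x) with hvdef
  set F : ℂ → ℂ := fun s' => killingForm ℂ g x ⁅v, gradVec g nJ bJ PJ (s' • u + x)⁆ with hFdef
  have hFeq : F = fun s' => ∑ j,
      MvPolynomial.eval (fun i => s' * bJ.repr u i + bJ.repr x i) (MvPolynomial.pderiv j PJ)
        * killingForm ℂ g x ⁅v, kdual g (bJ.coord j)⁆ := by
    funext s'
    have hc : (fun i => (bJ.repr (s' • u + x)) i)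
        = fun i => s' * bJ.repr u i + bJ.repr x i := by funext i; simp
    have hlie : ⁅v, ∑ j, (MvPolynomial.eval (fun i => s' * bJ.repr u i + bJ.repr x i)
        (MvPolynomial.pderiv j PJ)) • kdual g (bJ.coord j)⁆
        = ∑ j, (MvPolynomial.eval (fun i => s' * bJ.repr u i + bJ.repr x i)
            (MvPolynomial.pderiv j PJ)) • ⁅v, kdual g (bJ.coord j)⁆ := by
      rw [show ∀ y : g, ⁅v, y⁆ = LieAlgebra.ad ℂ g v y from fun y => rfl]
      simp [map_sum]
    simp only [hFdef, gradVec, hlie, map_sum, map_smul, smul_eq_mul, hc]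
  have hF : Continuous F := by
    rw [hFeq]
    apply continuous_finset_sum
    intro j _
    apply Continuous.mul _ continuous_const
    exact (MvPolynomial.continuous_eval _).comp
      (continuous_pi fun i => (continuous_id.mul continuous_const).add continuous_const)
  have h0 : Set.EqOn F (fun _ => 0) ({t}ᶜ : Set ℂ) := by
    intro s' hs'
    have hts : t ≠ s' := fun h => hs' (by simp [h.symm])
    exact pair_ne g hts u x _ _
      (gradVec_lie_self g nI bI PI I hI hinvI (t • u + x))
      (gradVec_lie_self g nJ bJ PJ J hJ hinvJ (s' • u + x))
  have : F = fun _ => 0 :=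
    Continuous.ext_on (dense_compl_singleton t) hF continuous_const h0
  exact congrFun this s

end aux


/-- Fomenko–Mischenko: Fix `u : g`.  The linear span `V_u` of all translated
invariants `x ↦ I (t • u + x)` (`I` an invariant polynomial function, `t : ℂ`) is Poisson
commutative: `[p,q](x) = (x, [dp(x), dq(x)]) = 0` for all `p, q ∈ V_u` and all `x`. -/
theorem translated_invariants_poisson_commute
    (g : Type*) [LieRing g] [LieAlgebra ℂ g] [Module.Finite ℂ g]
    [LieAlgebra.IsKilling ℂ g] [LieAlgebra.IsSemisimple ℂ g]
    (u : g) (p q : g → ℂ) (dp dq : g → g)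
    -- `p` and `q` lie in the span `V_u` of the translated invariants
    (hp : p ∈ Submodule.span ℂ {f : g → ℂ | ∃ (I : g → ℂ) (t : ℂ),
      (∃ (n : ℕ) (bV : Module.Basis (Fin n) ℂ g) (P : MvPolynomial (Fin n) ℂ),
        ∀ x : g, I x = MvPolynomial.eval (fun i => bV.repr x i) P) ∧
      (∀ x z : g, HasDerivAt (fun s : ℂ => I (x + s • ⁅z, x⁆)) 0 0) ∧
      f = fun x => I (t • u + x)})
    (hq : q ∈ Submodule.span ℂ {f : g → ℂ | ∃ (I : g → ℂ) (t : ℂ),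
      (∃ (n : ℕ) (bV : Module.Basis (Fin n) ℂ g) (P : MvPolynomial (Fin n) ℂ),
        ∀ x : g, I x = MvPolynomial.eval (fun i => bV.repr x i) P) ∧
      (∀ x z : g, HasDerivAt (fun s : ℂ => I (x + s • ⁅z, x⁆)) 0 0) ∧
      f = fun x => I (t • u + x)})
    -- `dp`, `dq` are the Killing-form gradients of `p`, `q`
    (hgradp : ∀ x z : g,
      HasDerivAt (fun t : ℂ => p (x + t • z)) (killingForm ℂ g (dp x) z) 0)
    (hgradq : ∀ x z : g,
      HasDerivAt (fun t : ℂ => q (x + t • z)) (killingForm ℂ g (dq x) z) 0) :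
    ∀ x : g, killingForm ℂ g x ⁅dp x, dq x⁆ = 0 := by
  intro x
  set Gen : Set g := {v : g | ∃ (I : g → ℂ) (t : ℂ) (n : ℕ) (b : Module.Basis (Fin n) ℂ g)
      (P : MvPolynomial (Fin n) ℂ),
      (∀ y : g, I y = MvPolynomial.eval (fun i => b.repr y i) P) ∧
      (∀ y z : g, HasDerivAt (fun s : ℂ => I (y + s • ⁅z, y⁆)) 0 0) ∧
      v = gradVec g n b P (t • u + x)} with hGen
  have key : ∀ (f : g → ℂ), f ∈ Submodule.span ℂ {f : g → ℂ | ∃ (I : g → ℂ) (t : ℂ),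
      (∃ (n : ℕ) (bV : Module.Basis (Fin n) ℂ g) (P : MvPolynomial (Fin n) ℂ),
        ∀ x : g, I x = MvPolynomial.eval (fun i => bV.repr x i) P) ∧
      (∀ x z : g, HasDerivAt (fun s : ℂ => I (x + s • ⁅z, x⁆)) 0 0) ∧
      f = fun x => I (t • u + x)} →
      ∃ v ∈ Submodule.span ℂ Gen, ∀ z : g,
        HasDerivAt (fun s : ℂ => f (x + s • z)) (killingForm ℂ g v z) 0 := by
    intro f hf
    induction hf using Submodule.span_induction with
    | mem f hfS =>
        obtain ⟨I, t, ⟨n, b, P, hI⟩, hinv, rfl⟩ := hfS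
        refine ⟨gradVec g n b P (t • u + x),
          Submodule.subset_span ⟨I, t, n, b, P, hI, hinv, rfl⟩, fun z => ?_⟩
        have h := hasDerivAt_gradVec g n b P (t • u + x) z
        have hfun : (fun s : ℂ => I (t • u + (x + s • z)))
            = fun s : ℂ => MvPolynomial.eval (fun i => b.repr ((t • u + x) + s • z) i) P := by
          funext s; rw [← add_assoc]; exact hI _
        show HasDerivAt (fun s : ℂ => I (t • u + (x + s • z))) _ 0
        rw [hfun]; exact h
    | zero =>
        exact ⟨0, Submodule.zero_mem _, fun z => by
          simpa using hasDerivAt_const (0 : ℂ) (0 : ℂ)⟩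
    | add f1 f2 _ _ ih1 ih2 =>
        obtain ⟨v, hv, hdv⟩ := ih1
        obtain ⟨w, hw, hdw⟩ := ih2
        exact ⟨v + w, Submodule.add_mem _ hv hw, fun z => by
          simpa [map_add] using (hdv z).fun_add (hdw z)⟩
    | smul a f1 _ ih1 =>
        obtain ⟨v, hv, hdv⟩ := ih1
        exact ⟨a • v, Submodule.smul_mem _ a hv, fun z => by
          simpa [map_smul, smul_eq_mul] using (hdv z).const_mul a⟩
  obtain ⟨v, hvmem, hdv⟩ := key p hp
  obtain ⟨w, hwmem, hdw⟩ := key q hq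
  have hdpx : dp x = v := by
    have h0 : dp x - v = 0 := by
      apply (LieAlgebra.IsKilling.killingForm_nondegenerate ℂ g).1
      intro z
      have h := (hgradp x z).unique (hdv z)
      simp [LinearMap.map_sub, LinearMap.sub_apply, h]
    exact sub_eq_zero.mp h0
  have hdqx : dq x = w := by
    have h0 : dq x - w = 0 := by
      apply (LieAlgebra.IsKilling.killingForm_nondegenerate ℂ g).1
      intro z
      have h := (hgradq x z).unique (hdw z)
      simp [LinearMap.map_sub, LinearMap.sub_apply, h]
    exact sub_eq_zero.mp h0
  rw [hdpx, hdqx]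
  clear hdv hdw hdpx hdqx hgradp hgradq hp hq key
  induction hvmem, hwmem using Submodule.span_induction₂ with
  | mem_mem v w hv hw =>
      obtain ⟨I, t, nI, bI, PI, hI, hinvI, rfl⟩ := hv
      obtain ⟨J, s, nJ, bJ, PJ, hJ, hinvJ, rfl⟩ := hw
      exact pair_zero g u x bI PI I hI hinvI t bJ PJ J hJ hinvJ s
  | zero_left w hw => simp
  | zero_right v hv => simp
  | add_left v1 v2 w _ _ _ h1 h2 => simp [add_lie, map_add, h1, h2]
  | add_right v w1 w2 _ _ _ h1 h2 => simp [lie_add, map_add, h1, h2]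
  | smul_left a v w _ _ h1 => simp [smul_lie, map_smul, h1]
  | smul_right a v w _ _ h1 => simp [lie_smul, map_smul, h1]
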